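/- Let G be a group of prime order and 𝒜 an S-ring over G. Then 𝒜 is cyclotomic, i.e., there exists K ≤ Aut(G) such that the basic sets of 𝒜 are exactly the orbits of K on G. -/

import Mathlib

open scoped Pointwise

noncomputable section

namespace Paper

/-- The element `∑_{x ∈ X} x` of the integer group ring `ℤG`. -/
def sumElems {G : Type*} [Group G] [Finite G] (X : Set G) : MonoidAlgebra ℤ G :=
  ∑ x ∈ X.toFinite.toFinset, MonoidAlgebra.single x (1 : ℤ)

/-- A Schur ring (S-ring) over a finite group `G`, described by the partition of `G`
into its basic sets: the partition contains `{1}`, is closed under taking inverses,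
and its `ℤ`-span inside the group ring `ℤG` is closed under multiplication
(hence is a subring of `ℤG`). -/
structure SRing (G : Type*) [Group G] [Finite G] where
  basic : Set (Set G)
  nonempty : ∀ X ∈ basic, X.Nonempty
  cover : ∀ g : G, ∃! X, X ∈ basic ∧ g ∈ X
  one_mem : ({1} : Set G) ∈ basic
  inv_mem : ∀ X ∈ basic, X⁻¹ ∈ basic
  mul_mem : ∀ a b : MonoidAlgebra ℤ G,
    a ∈ Submodule.span ℤ (sumElems '' basic) →
    b ∈ Submodule.span ℤ (sumElems '' basic) →
    a * b ∈ Submodule.span ℤ (sumElems '' basic)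

namespace SRing

/-- The `ℤ`-module underlying an S-ring. -/
def span {G : Type*} [Group G] [Finite G] (A : SRing G) :
    Submodule ℤ (MonoidAlgebra ℤ G) :=
  Submodule.span ℤ (sumElems '' A.basic)

/-- A set `X ⊆ G` is an `𝒜`-set if `∑_{x ∈ X} x ∈ 𝒜`. -/
def IsASet {G : Type*} [Group G] [Finite G] (A : SRing G) (X : Set G) : Prop :=
  sumElems X ∈ A.span

/-- A subgroup which is an `𝒜`-set is an `𝒜`-subgroup. -/
def IsASubgroup {G : Type*} [Group G] [Finite G] (A : SRing G) (H : Subgroup G) : Prop :=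
  A.IsASet (H : Set G)

end SRing

/-- The arc set `R(X) = {(g, xg) : x ∈ X, g ∈ G}` of the Cayley digraph `Cay(G, X)`. -/
def Rel {G : Type*} [Group G] (X : Set G) : Set (G × G) := {p | p.2 * p.1⁻¹ ∈ X}

/-- `f : G ≃ G'` is an isomorphism from the S-ring `A` over `G` to the S-ring `B`
over `G'` if `{R(X)^f : X ∈ 𝒮(A)} = {R(Y) : Y ∈ 𝒮(B)}`. -/
def IsSRingIso {G G' : Type*} [Group G] [Finite G] [Group G'] [Finite G']
    (A : SRing G) (B : SRing G') (f : G ≃ G') : Prop :=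
  (fun X => Prod.map f f '' Rel X) '' A.basic = Rel '' B.basic

/-- The automorphism group `Aut(𝒜)` of an S-ring, as a set of permutations of `G`. -/
def SRing.autSet {G : Type*} [Group G] [Finite G] (A : SRing G) : Set (Equiv.Perm G) :=
  {f | ∀ X ∈ A.basic, Prod.map f f '' Rel X = Rel X}

/-- The set `Iso(𝒜)` of isomorphisms from `𝒜` onto S-rings over the same group `G`. -/
def SRing.isoSet {G : Type*} [Group G] [Finite G] (A : SRing G) : Set (Equiv.Perm G) :=
  {f | ∃ B : SRing G, IsSRingIso A B f}

/-- `Aut(G)` as a set of permutations of `G`. -/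
def autPerm (G : Type*) [Group G] : Set (Equiv.Perm G) :=
  Set.range fun φ : G ≃* G => (φ.toEquiv : Equiv.Perm G)

/-- A CI-S-ring: `Aut(𝒜)·Aut(G) = Iso(𝒜)`. -/
def SRing.IsCI {G : Type*} [Group G] [Finite G] (A : SRing G) : Prop :=
  A.autSet * autPerm G = A.isoSet

/-- The orbits on `G` of a set of automorphisms of `G`. -/
def setOrbits {G : Type*} [Group G] (Δ : Set (MulAut G)) : Set (Set G) :=
  Set.range fun g : G => (fun φ : MulAut G => φ g) '' Δ

/-- An S-ring is cyclotomic if its basic sets are exactly the orbits of some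
subgroup `K ≤ Aut(G)`. -/
def SRing.IsCyclotomic {G : Type*} [Group G] [Finite G] (A : SRing G) : Prop :=
  ∃ K : Subgroup (MulAut G), A.basic = setOrbits (K : Set (MulAut G))

/-- `Aut_G(𝒜) = Aut(𝒜) ∩ Aut(G)`, as a set of automorphisms of `G`. -/
def SRing.autGSet {G : Type*} [Group G] [Finite G] (A : SRing G) : Set (MulAut G) :=
  {φ | (φ.toEquiv : Equiv.Perm G) ∈ A.autSet}

/-- A (cyclotomic) S-ring is Cayley minimal if `Aut_G(𝒜)` is the only subgroup of
`Aut(G)` whose orbits on `G` coincide with those of `Aut_G(𝒜)`. -/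
def SRing.IsCayleyMinimal {G : Type*} [Group G] [Finite G] (A : SRing G) : Prop :=
  ∀ K : Subgroup (MulAut G),
    setOrbits (K : Set (MulAut G)) = setOrbits A.autGSet →
    (K : Set (MulAut G)) = A.autGSet

/-- `rad(X) = {g ∈ G : gX = Xg = X}`. -/
def rad {G : Type*} [Group G] (X : Set G) : Set G := {g | {g} * X = X ∧ X * {g} = X}

/-- The class `𝓔_c` of finite abelian groups all of whose Sylow subgroups are
elementary abelian or isomorphic to `C₄`. -/
def InEc (G : Type*) [CommGroup G] [Finite G] : Prop :=
  ∀ p : ℕ, p.Prime → ∀ P : Sylow p G,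
    (∀ x : ↥(P : Subgroup G), x ^ p = 1) ∨
    Nonempty (↥(P : Subgroup G) ≃* Multiplicative (ZMod 4))

/-- A finite group `G` is a `DCI`-group if any two Cayley digraphs over `G` that are
isomorphic as digraphs are Cayley isomorphic. -/
def IsDCIGroup (G : Type*) [Group G] : Prop :=
  ∀ S T : Set G,
    (∃ f : G ≃ G, ∀ g h : G, h * g⁻¹ ∈ S ↔ f h * (f g)⁻¹ ∈ T) →
    ∃ φ : G ≃* G, ⇑φ '' S = T

/-- The subgroup `G_r ≤ Sym(G)` of right translations of `G`. -/
def rightTranslations (G : Type*) [Group G] : Subgroup (Equiv.Perm G) where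
  carrier := Set.range fun g : G => Equiv.mulRight g
  one_mem' := ⟨1, by ext x; simp⟩
  mul_mem' := by
    rintro _ _ ⟨a, rfl⟩ ⟨b, rfl⟩
    exact ⟨b * a, by ext x; simp [mul_assoc]⟩
  inv_mem' := by
    rintro _ ⟨a, rfl⟩
    exact ⟨a⁻¹, by ext x; simp⟩

/-- The basic sets of the S-ring `V(K, G)`: the orbits of the stabilizer `K_e`
of the identity on `G`. -/
def VBasic {G : Type*} [Group G] (K : Subgroup (Equiv.Perm G)) : Set (Set G) :=
  Set.range fun g : G => MulAction.orbit (MulAction.stabilizer K (1 : G)) g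

/-- A subgroup `R ≤ Sym(G)` is regular if for all `g, h ∈ G` there is a
unique `r ∈ R` with `r(g) = h`. -/
def IsRegularSubgroup {G : Type*} [Group G] (R : Subgroup (Equiv.Perm G)) : Prop :=
  ∀ g h : G, ∃! r : R, (r : Equiv.Perm G) g = h

/-- `K ∈ Sup(G_r)`. -/
def InSup {G : Type*} [Group G] (K : Subgroup (Equiv.Perm G)) : Prop :=
  rightTranslations G ≤ K

/-- `K ∈ Sup₂(G_r)`, i.e. `K ≥ G_r` and `K = K^{(2)} = Aut(V(K,G))`. -/
def InSup2 {G : Type*} [Group G] [Finite G] (K : Subgroup (Equiv.Perm G)) : Prop :=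
  InSup K ∧
    (K : Set (Equiv.Perm G)) =
      {f : Equiv.Perm G | ∀ X ∈ VBasic K, Prod.map (⇑f) (⇑f) '' Rel X = Rel X}

/-- `K₁ ⪯_G K₂`: `K₁ ≤ K₂` and every regular subgroup of `K₂` isomorphic to `G`
is conjugate in `K₂` to a subgroup of `K₁`. -/
def GComplete {G : Type*} [Group G] (K₁ K₂ : Subgroup (Equiv.Perm G)) : Prop :=
  K₁ ≤ K₂ ∧ ∀ R : Subgroup (Equiv.Perm G), R ≤ K₂ → IsRegularSubgroup R →
    Nonempty (↥R ≃* G) → ∃ k ∈ K₂, ∀ r ∈ R, k * r * k⁻¹ ∈ K₁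

/-- `K ∈ Sup₂^min(G_r)`: a minimal element of `Sup₂(G_r)` with respect to `⪯_G`. -/
def InSup2Min {G : Type*} [Group G] [Finite G] (K : Subgroup (Equiv.Perm G)) : Prop :=
  InSup2 K ∧ ∀ K' : Subgroup (Equiv.Perm G), InSup2 K' → GComplete K' K → K' = K

/-- The basic sets of the restriction `𝒜_U` of `𝒜` to an `𝒜`-subgroup `U`:
the basic sets of `𝒜` contained in `U`, viewed inside `U`. -/
def restrictBasic {G : Type*} [Group G] [Finite G] (A : SRing G) (U : Subgroup G) :
    Set (Set ↥U) :=
  {Y : Set ↥U | Subtype.val '' Y ∈ A.basic}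

/-- The basic sets of the quotient S-ring `𝒜_{G/L}`: the images of the basic
sets of `𝒜` under the canonical epimorphism `G → G/L`. -/
def quotBasic {G : Type*} [CommGroup G] [Finite G] (A : SRing G) (L : Subgroup G) :
    Set (Set (G ⧸ L)) :=
  (fun X => QuotientGroup.mk '' X) '' A.basic

/-- The basic sets of the S-ring `𝒜_S` on the section `S = U/L`: the images under
the canonical epimorphism `U → U/L` of the basic sets of `𝒜` contained in `U`. -/
def secBasic {G : Type*} [CommGroup G] [Finite G] (A : SRing G) (U L : Subgroup G) :
    Set (Set (↥U ⧸ L.subgroupOf U)) :=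
  {Z | ∃ X ∈ A.basic, X ⊆ (U : Set G) ∧
    Z = QuotientGroup.mk '' (Subtype.val ⁻¹' X : Set ↥U)}

/-- The set of bijections of `H ⧸ N` induced by members of `Δ ⊆ Sym(H)`
permuting the `N`-cosets. -/
def inducedOnQuot {H : Type*} [CommGroup H] (N : Subgroup H) (Δ : Set (Equiv.Perm H)) :
    Set (Equiv.Perm (H ⧸ N)) :=
  {σ | ∃ f ∈ Δ, ∀ x : H, σ (QuotientGroup.mk x) = QuotientGroup.mk (f x)}

/-- The canonical (injective) homomorphism `U/L → G/L` for `L ≤ U ≤ G`. -/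
def secIncl {G : Type*} [CommGroup G] (U L : Subgroup G) :
    (↥U ⧸ L.subgroupOf U) →* G ⧸ L :=
  QuotientGroup.map (L.subgroupOf U) L U.subtype (fun _ hx => hx)

/-- The set of bijections of the section `S = U/L` induced by members of
`Δ ⊆ Sym(G/L)` preserving `S` (i.e. permuting the `L`-cosets contained in `U`). -/
def inducedOnSec {G : Type*} [CommGroup G] (U L : Subgroup G)
    (Δ : Set (Equiv.Perm (G ⧸ L))) : Set (Equiv.Perm (↥U ⧸ L.subgroupOf U)) :=
  {σ | ∃ φ ∈ Δ, ∀ x : ↥U,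
    φ (QuotientGroup.mk (x : G) : G ⧸ L) = secIncl U L (σ (QuotientGroup.mk x))}

/-- The basic sets of the S-ring `(ℤL ⊗ 𝒜_V) ≀_{(V×L)/V} ℤ(U/V)` over `U`,
where `Lu, V ≤ U` and `𝒜_V` is the restriction of `𝒜_U` to `V`. -/
def tensorWreathBasic {U : Type*} [CommGroup U] [Finite U] (AU : SRing U)
    (Lu V : Subgroup U) : Set (Set U) :=
  {Z | (∃ l ∈ Lu, ∃ X ∈ AU.basic, X ⊆ (V : Set U) ∧ Z = l • X) ∨
       (∃ u : U, u ∉ Lu ⊔ V ∧ Z = u • (V : Set U))}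

/-- Condition (CA): `𝒜_S = ℤS`. -/
def CondCA {G : Type*} [CommGroup G] [Finite G] (A : SRing G) (U L : Subgroup G) : Prop :=
  ∀ AS : SRing (↥U ⧸ L.subgroupOf U), AS.basic = secBasic A U L →
    AS.basic = Set.range fun s => ({s} : Set (↥U ⧸ L.subgroupOf U))

/-- Condition (CA'): `𝒜_U` or `𝒜_{G/L}` is cyclotomic and `𝒜_S` is Cayley minimal. -/
def CondCA' {G : Type*} [CommGroup G] [Finite G] (A : SRing G) (U L : Subgroup G) : Prop :=
  ((∀ AU : SRing ↥U, AU.basic = restrictBasic A U → AU.IsCyclotomic) ∨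
   (∀ AQ : SRing (G ⧸ L), AQ.basic = quotBasic A L → AQ.IsCyclotomic)) ∧
  (∀ AS : SRing (↥U ⧸ L.subgroupOf U), AS.basic = secBasic A U L → AS.IsCayleyMinimal)

/-- Condition (CA''): `U ≅ C_{4p}`, `L ≅ C₂` and
`𝒜_U = (ℤL ⊗ 𝒜_V) ≀_{(V×L)/V} ℤ(U/V)` for an `𝒜_U`-subgroup `V` of order `p`. -/
def CondCA'' {G : Type*} [CommGroup G] [Finite G] (p : ℕ) (A : SRing G)
    (U L : Subgroup G) : Prop :=
  Nat.card ↥U = 4 * p ∧ IsCyclic ↥U ∧ Nat.card ↥L = 2 ∧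
  ∀ AU : SRing ↥U, AU.basic = restrictBasic A U →
    ∃ V : Subgroup ↥U, AU.IsASubgroup V ∧ Nat.card ↥V = p ∧
      AU.basic = tensorWreathBasic AU (L.subgroupOf U) V

/-- `𝒜 = 𝒜_{G₁} ⊗ 𝒜_{G₂}` for `G = G₁ × G₂` (internally). -/
def IsTensorDecomp {G : Type*} [CommGroup G] [Finite G] (A : SRing G)
    (G₁ G₂ : Subgroup G) : Prop :=
  A.IsASubgroup G₁ ∧ A.IsASubgroup G₂ ∧ G₁ ⊓ G₂ = ⊥ ∧ G₁ ⊔ G₂ = ⊤ ∧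
  A.basic = {Z | ∃ X ∈ A.basic, ∃ Y ∈ A.basic,
    X ⊆ (G₁ : Set G) ∧ Y ⊆ (G₂ : Set G) ∧ Z = X * Y}

/-- `𝒜` is the tensor product of two S-rings over proper nontrivial subgroups of `G`. -/
def TensorConclusion {G : Type*} [CommGroup G] [Finite G] (A : SRing G) : Prop :=
  ∃ G₁ G₂ : Subgroup G, G₁ ≠ ⊥ ∧ G₁ ≠ ⊤ ∧ G₂ ≠ ⊥ ∧ G₂ ≠ ⊤ ∧ IsTensorDecomp A G₁ G₂

/-- `𝒜` is a nontrivial `S = U/L`-wreath product satisfying one of the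
conditions (CA), (CA'), (CA''). -/
def WreathConclusion {G : Type*} [CommGroup G] [Finite G] (p : ℕ) (A : SRing G) : Prop :=
  ∃ U L : Subgroup G, L ≤ U ∧ A.IsASubgroup U ∧ A.IsASubgroup L ∧ L ≠ ⊥ ∧ U ≠ ⊤ ∧
    (∀ X ∈ A.basic, ¬ X ⊆ (U : Set G) → (L : Set G) ⊆ rad X) ∧
    (CondCA A U L ∨ CondCA' A U L ∨ CondCA'' p A U L)



namespace S10

open Polynomial
set_option linter.unusedSectionVars false

variable (p : ℕ+) [hpF : Fact (p : ℕ).Prime]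

lemma pow_mod {M : Type*} [Monoid M] {x : M} {n : ℕ} (hx : x ^ n = 1) (a : ℕ) :
    x ^ (a % n) = x ^ a := by
  conv_rhs => rw [← Nat.div_add_mod a n, pow_add, pow_mul, hx, one_pow, one_mul]

variable {G : Type*} [Group G] [Fintype G] (e : G ≃* Multiplicative (ZMod (p : ℕ)))

instance : NeZero ((p : ℕ)) := ⟨p.pos.ne'⟩

instance cycAlg : Algebra ℚ (CyclotomicField (p : ℕ) ℚ) := CyclotomicField.algebra _ _

def zet : CyclotomicField p ℚ := IsCyclotomicExtension.zeta p ℚ _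

lemma zet_spec : IsPrimitiveRoot (zet p) (p : ℕ) := IsCyclotomicExtension.zeta_spec p ℚ _

lemma zet_pow : (zet p) ^ (p : ℕ) = 1 := (zet_spec p).pow_eq_one

/-- The character sending `g` to `ζ ^ (e g)`. -/
def chi : G →* CyclotomicField p ℚ where
  toFun g := zet p ^ ((e g).toAdd).val
  map_one' := by simp
  map_mul' a b := by
    simp only [map_mul, toAdd_mul, ZMod.val_add, pow_mod (zet_pow p), pow_add]

lemma chi_apply (g : G) : chi p e g = zet p ^ ((e g).toAdd).val := rfl

/-- The automorphism of `G` corresponding to a unit `m` of `ZMod p`. -/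
def psi : (ZMod (p : ℕ))ˣ →* MulAut G where
  toFun m :=
    { toFun := fun g => e.symm (Multiplicative.ofAdd ((m : ZMod (p : ℕ)) * (e g).toAdd))
      invFun := fun g => e.symm (Multiplicative.ofAdd (((m⁻¹ : (ZMod (p : ℕ))ˣ) : ZMod (p : ℕ)) * (e g).toAdd))
      left_inv := fun g => by
        show e.symm _ = g
        rw [MulEquiv.apply_symm_apply, toAdd_ofAdd, ← mul_assoc, Units.inv_mul, one_mul,
          ofAdd_toAdd, MulEquiv.symm_apply_apply]
      right_inv := fun g => by
        show e.symm _ = g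
        rw [MulEquiv.apply_symm_apply, toAdd_ofAdd, ← mul_assoc, Units.mul_inv, one_mul,
          ofAdd_toAdd, MulEquiv.symm_apply_apply]
      map_mul' := fun a b => by
        show e.symm _ = e.symm _ * e.symm _
        rw [map_mul e a b, toAdd_mul, mul_add, ofAdd_add, map_mul e.symm] }
  map_one' := by
    ext g
    show e.symm (Multiplicative.ofAdd (((1 : (ZMod (p : ℕ))ˣ) : ZMod (p : ℕ)) * (e g).toAdd)) = g
    rw [Units.val_one, one_mul, ofAdd_toAdd, MulEquiv.symm_apply_apply]
  map_mul' m₁ m₂ := by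
    ext g
    show e.symm (Multiplicative.ofAdd (((m₁ * m₂ : (ZMod (p : ℕ))ˣ) : ZMod (p : ℕ)) * (e g).toAdd))
      = e.symm (Multiplicative.ofAdd ((m₁ : ZMod (p : ℕ)) *
        (e (e.symm (Multiplicative.ofAdd ((m₂ : ZMod (p : ℕ)) * (e g).toAdd)))).toAdd))
    rw [MulEquiv.apply_symm_apply, toAdd_ofAdd, Units.val_mul, mul_assoc]

lemma psi_apply (m : (ZMod (p : ℕ))ˣ) (g : G) :
    psi p e m g = e.symm (Multiplicative.ofAdd ((m : ZMod (p : ℕ)) * (e g).toAdd)) := rfl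

lemma chi_psi (m : (ZMod (p : ℕ))ˣ) (g : G) :
    chi p e (psi p e m g) = chi p e g ^ ((m : ZMod (p : ℕ))).val := by
  rw [chi_apply, chi_apply, psi_apply]
  simp only [MulEquiv.apply_symm_apply, toAdd_ofAdd]
  rw [ZMod.val_mul, pow_mod (zet_pow p), mul_comm, pow_mul]

/-- Evaluation of the group ring at the character `chi`. -/
def piZ : MonoidAlgebra ℤ G →ₐ[ℤ] CyclotomicField p ℚ :=
  MonoidAlgebra.lift ℤ _ G (chi p e)

/-- `η X = ∑_{x ∈ X} χ x`. -/
def eta (X : Set G) : CyclotomicField p ℚ := ∑ x ∈ X.toFinite.toFinset, chi p e x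

lemma piZ_sumElems (X : Set G) : piZ p e (sumElems X) = eta p e X := by
  unfold sumElems eta piZ
  rw [map_sum]
  refine Finset.sum_congr rfl fun x _ => ?_
  rw [MonoidAlgebra.lift_single, one_smul]

lemma sum_chi : ∑ g : G, chi p e g = 0 := by
  have h1 : ∑ g : G, chi p e g = ∑ k : ZMod (p : ℕ), zet p ^ k.val := by
    refine Fintype.sum_bijective (fun g => (e g).toAdd) ?_ _ _ fun g => rfl
    exact (e.toEquiv.trans Multiplicative.toAdd).bijective
  have h2 : ∑ k : ZMod (p : ℕ), zet p ^ k.val = ∑ i ∈ Finset.range (p : ℕ), zet p ^ i := by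
    refine Finset.sum_nbij' (fun k => k.val) (fun i => (i : ZMod (p : ℕ))) ?_ ?_ ?_ ?_ ?_
    · intro k _; exact Finset.mem_range.2 (ZMod.val_lt k)
    · intro i _; exact Finset.mem_univ _
    · intro k _; exact ZMod.natCast_rightInverse k
    · intro i hi; exact ZMod.val_cast_of_lt (Finset.mem_range.1 hi)
    · intro k _; rfl
  rw [h1, h2, (zet_spec p).geom_sum_eq_zero hpF.out.one_lt]

lemma li_chi : LinearIndependent ℚ (fun g : {g : G // g ≠ 1} => chi p e g) := by
  classical
  set pb := (zet_spec p).powerBasis ℚ with hpb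
  have hdim : pb.dim = (p : ℕ) - 1 := by
    rw [hpb, IsPrimitiveRoot.powerBasis_dim,
      ← (zet_spec p).minpoly_eq_cyclotomic_of_irreducible
        (Polynomial.cyclotomic.irreducible_rat p.pos),
      Polynomial.natDegree_cyclotomic, Nat.totient_prime hpF.out]
  have hbase : LinearIndependent ℚ (fun i : Fin pb.dim => zet p ^ (i : ℕ)) := by
    have := pb.basis.linearIndependent
    have hco : ⇑pb.basis = fun i : Fin pb.dim => zet p ^ (i : ℕ) := by
      rw [pb.coe_basis, hpb, IsPrimitiveRoot.powerBasis_gen]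
    rwa [hco] at this
  have hz0 : zet p ≠ 0 := (zet_spec p).ne_zero p.pos.ne'
  have hshift : LinearIndependent ℚ (fun i : Fin pb.dim => zet p ^ ((i : ℕ) + 1)) := by
    have hmap := hbase.map' (LinearMap.mulLeft ℚ (zet p))
      (LinearMap.ker_eq_bot.2 (mul_right_injective₀ hz0))
    have : (LinearMap.mulLeft ℚ (zet p)) ∘ (fun i : Fin pb.dim => zet p ^ (i : ℕ))
        = fun i : Fin pb.dim => zet p ^ ((i : ℕ) + 1) := by
      funext i
      simp [LinearMap.mulLeft_apply, pow_succ, mul_comm]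
    rwa [this] at hmap
  have hval : ∀ g : {g : G // g ≠ 1}, (e g.1).toAdd.val ≠ 0 := by
    intro g h
    exact g.2 (by
      have : (e g.1).toAdd = 0 := (ZMod.val_eq_zero _).1 h
      have h2 : e g.1 = 1 := by
        rw [← ofAdd_toAdd (e g.1), this]; rfl
      have := congrArg e.symm h2
      rwa [e.symm_apply_apply, map_one] at this)
  let f : {g : G // g ≠ 1} → Fin pb.dim := fun g =>
    ⟨(e g.1).toAdd.val - 1, by
      rw [hdim]
      have h1 := ZMod.val_lt (e g.1).toAdd
      have h2 := hval g
      have h3 : 2 ≤ (p : ℕ) := hpF.out.two_le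
      omega⟩
  have hfinj : Function.Injective f := by
    intro a b hab
    have h1 := hval a
    have h2 := hval b
    have : (e a.1).toAdd.val = (e b.1).toAdd.val := by
      have := congrArg (fun x : Fin pb.dim => (x : ℕ)) hab
      simp only [f] at this
      omega
    have hval_inj : (e a.1).toAdd = (e b.1).toAdd := ZMod.val_injective _ this
    have : e a.1 = e b.1 := by
      have := congrArg Multiplicative.ofAdd hval_inj
      rwa [ofAdd_toAdd, ofAdd_toAdd] at this
    exact Subtype.ext (e.injective this)
  have hcomp := hshift.comp f hfinj
  have : (fun i : Fin pb.dim => zet p ^ ((i : ℕ) + 1)) ∘ f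
      = fun g : {g : G // g ≠ 1} => chi p e g := by
    funext g
    have := hval g
    simp only [Function.comp_apply, chi_apply, f]
    congr 1
    omega
  rwa [this] at hcomp

lemma coeff_const (b : G → ℚ) (hb : ∑ g : G, b g • chi p e g = 0) (g h : G) : b g = b h := by
  classical
  suffices h1 : ∀ g : G, b g = b 1 by rw [h1 g, h1 h]
  intro g0
  by_cases hg0 : g0 = 1
  · rw [hg0]
  have li := li_chi p e
  rw [Fintype.linearIndependent_iff] at li
  have hs : ∀ f : G → CyclotomicField p ℚ,
      ∑ x : {g : G // g ≠ 1}, f x.1 = ∑ x ∈ Finset.univ.erase (1 : G), f x := by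
    intro f
    exact (Finset.sum_subtype (Finset.univ.erase (1 : G)) (fun x => by simp) f).symm
  have hchi1 : ∑ x ∈ Finset.univ.erase (1 : G), chi p e x = -1 := by
    have := Finset.add_sum_erase Finset.univ (chi p e) (Finset.mem_univ (1 : G))
    beta_reduce at this
    rw [sum_chi p e, map_one] at this
    linear_combination this
  have hbchi : ∑ x ∈ Finset.univ.erase (1 : G), b x • chi p e x = -(b 1 • 1) := by
    have := Finset.add_sum_erase Finset.univ (fun x => b x • chi p e x) (Finset.mem_univ (1 : G))
    beta_reduce at this
    rw [hb, map_one] at this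
    linear_combination this
  have key : ∑ x : {g : G // g ≠ 1}, (b x.1 - b 1) • chi p e x.1 = 0 := by
    rw [hs (fun x => (b x - b 1) • chi p e x)]
    have : ∀ x : G, (b x - b 1) • chi p e x = b x • chi p e x - b 1 • chi p e x := by
      intro x; rw [sub_smul]
    simp_rw [this]
    erw [Finset.sum_sub_distrib, hbchi, ← Finset.smul_sum, hchi1]
    simp
    erw [Rat.smul_one_eq_cast]; ring
  have := li _ key ⟨g0, hg0⟩
  linarith [this]


section SRingPart

variable (A : SRing G)

lemma basic_unique {X Y : Set G} (hX : X ∈ A.basic) (hY : Y ∈ A.basic) {g : G}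
    (hgX : g ∈ X) (hgY : g ∈ Y) : X = Y :=
  ((A.cover g).unique ⟨hX, hgX⟩ ⟨hY, hgY⟩)

/-- The basic set containing `g`. -/
def blk (g : G) : Set G := ((A.cover g).exists).choose

lemma blk_mem (g : G) : blk A g ∈ A.basic := ((A.cover g).exists).choose_spec.1

lemma mem_blk (g : G) : g ∈ blk A g := ((A.cover g).exists).choose_spec.2

lemma blk_eq {X : Set G} (hX : X ∈ A.basic) {g : G} (hg : g ∈ X) : blk A g = X :=
  basic_unique A (blk_mem A g) hX (mem_blk A g) hg

lemma not_one_mem {X : Set G} (hX : X ∈ A.basic) (hX1 : X ≠ {1}) : (1 : G) ∉ X :=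
  fun h => hX1 (basic_unique A hX A.one_mem h rfl)

/-- The `ℚ`-span of the `η X`, `X` basic. -/
def MM : Submodule ℚ (CyclotomicField p ℚ) :=
  Submodule.span ℚ ((fun X => eta p e X) '' A.basic)

lemma eta_mem_MM {X : Set G} (hX : X ∈ A.basic) : eta p e X ∈ MM p e A :=
  Submodule.subset_span ⟨X, hX, rfl⟩

lemma sumElems_mem_span {X : Set G} (hX : X ∈ A.basic) : sumElems X ∈ A.span :=
  Submodule.subset_span ⟨X, hX, rfl⟩

lemma piZ_mem_MM {a : MonoidAlgebra ℤ G} (ha : a ∈ A.span) : piZ p e a ∈ MM p e A := by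
  induction ha using Submodule.span_induction with
  | mem x hx =>
    obtain ⟨X, hX, rfl⟩ := hx
    rw [piZ_sumElems]
    exact eta_mem_MM p e A hX
  | zero => rw [map_zero]; exact (MM p e A).zero_mem
  | add x y _ _ hx hy => rw [map_add]; exact (MM p e A).add_mem hx hy
  | smul z x _ hx =>
    rw [map_zsmul, ← Int.cast_smul_eq_zsmul ℚ]
    exact (MM p e A).smul_mem _ hx

lemma one_mem_MM : (1 : CyclotomicField p ℚ) ∈ MM p e A := by
  have h := eta_mem_MM p e A A.one_mem
  have : eta p e ({1} : Set G) = 1 := by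
    unfold eta
    rw [show (({1} : Set G).toFinite).toFinset = {(1 : G)} from by
      ext x; rw [Set.Finite.mem_toFinset]; simp, Finset.sum_singleton, map_one]
  rwa [this] at h

lemma MM_mul_mem : ∀ x ∈ MM p e A, ∀ y ∈ MM p e A, x * y ∈ MM p e A := by
  have key : MM p e A * MM p e A ≤ MM p e A := by
    rw [MM, Submodule.span_mul_span, Submodule.span_le]
    rintro z hz
    rw [Set.mem_mul] at hz
    obtain ⟨x, ⟨X, hX, rfl⟩, y, ⟨Y, hY, rfl⟩, rfl⟩ := hz
    rw [SetLike.mem_coe]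
    show eta p e X * eta p e Y ∈ MM p e A
    rw [← piZ_sumElems, ← piZ_sumElems, ← map_mul]
    exact piZ_mem_MM p e A
      (A.mul_mem _ _ (sumElems_mem_span A hX) (sumElems_mem_span A hY))
  intro x hx y hy
  exact key (Submodule.mul_mem_mul hx hy)

/-- `M` as a subalgebra. -/
def EE : Subalgebra ℚ (CyclotomicField p ℚ) :=
  (MM p e A).toSubalgebra (one_mem_MM p e A)
    (fun x y hx hy => MM_mul_mem p e A x hx y hy)

/-- `M` as an intermediate field. -/
def EF : IntermediateField ℚ (CyclotomicField p ℚ) := by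
  haveI : FiniteDimensional ℚ (CyclotomicField p ℚ) :=
    IsCyclotomicExtension.finiteDimensional {(p : ℕ)} ℚ _
  haveI : Algebra.IsAlgebraic ℚ (CyclotomicField p ℚ) := Algebra.IsAlgebraic.of_finite ℚ _
  exact Subalgebra.IsAlgebraic.toIntermediateField
    (S := EE p e A) (fun x _ => Algebra.IsAlgebraic.isAlgebraic x)

lemma mem_EF {x : CyclotomicField p ℚ} : x ∈ EF p e A ↔ x ∈ MM p e A := Iff.rfl

lemma fix_mem {x : CyclotomicField p ℚ}
    (hx : ∀ σ ∈ (EF p e A).fixingSubgroup, σ x = x) : x ∈ MM p e A := by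
  haveI : FiniteDimensional ℚ (CyclotomicField p ℚ) :=
    IsCyclotomicExtension.finiteDimensional {(p : ℕ)} ℚ _
  haveI : IsGalois ℚ (CyclotomicField p ℚ) := IsCyclotomicExtension.isGalois {(p : ℕ)} ℚ _
  have hmem : x ∈ IntermediateField.fixedField (EF p e A).fixingSubgroup := by
    intro σ
    exact hx σ.1 σ.2
  rw [IsGalois.fixedField_fixingSubgroup (EF p e A)] at hmem
  exact hmem

/-- The homomorphism from the Galois group to `Aut(G)`. -/
def Phi : (CyclotomicField p ℚ ≃ₐ[ℚ] CyclotomicField p ℚ) →* MulAut G :=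
  (psi p e).comp ((zet_spec p).autToPow ℚ)

lemma chi_Phi (σ : CyclotomicField p ℚ ≃ₐ[ℚ] CyclotomicField p ℚ) (g : G) :
    chi p e (Phi p e σ g) = σ (chi p e g) := by
  have hspec := (zet_spec p).autToPow_spec ℚ σ
  calc chi p e (Phi p e σ g)
      = (chi p e g) ^ (((zet_spec p).autToPow ℚ σ : ZMod (p : ℕ))).val := chi_psi p e _ g
    _ = (zet p ^ (((zet_spec p).autToPow ℚ σ : ZMod (p : ℕ))).val) ^ ((e g).toAdd).val := by
        rw [chi_apply, ← pow_mul, ← pow_mul, mul_comm]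
    _ = σ (chi p e g) := by rw [hspec, chi_apply, map_pow]

lemma eta_image (φ : MulAut G) (X : Set G) :
    eta p e ((fun g => φ g) '' X) = ∑ x ∈ X.toFinite.toFinset, chi p e (φ x) := by
  classical
  unfold eta
  rw [show (((fun g => φ g) '' X).toFinite).toFinset
      = X.toFinite.toFinset.image (fun g => φ g) from by
    ext x
    simp only [Set.Finite.mem_toFinset, Finset.mem_image, Set.mem_image]]
  rw [Finset.sum_image (fun a _ b _ h => φ.injective h)]

lemma sigma_eta (σ : CyclotomicField p ℚ ≃ₐ[ℚ] CyclotomicField p ℚ) (X : Set G) :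
    σ (eta p e X) = eta p e ((fun g => Phi p e σ g) '' X) := by
  rw [eta_image, eta]
  rw [map_sum]
  exact Finset.sum_congr rfl fun x _ => (chi_Phi p e σ x).symm

open scoped Classical in
lemma eta_ind (X : Set G) :
    ∑ g : G, (if g ∈ X then (1 : ℚ) else 0) • chi p e g = eta p e X := by
  classical
  have h1 : ∀ g : G, (if g ∈ X then (1 : ℚ) else 0) • chi p e g
      = if g ∈ X then chi p e g else 0 := by
    intro g; split <;> simp
  simp_rw [h1]
  rw [← Finset.sum_filter]
  rw [show Finset.univ.filter (· ∈ X) = X.toFinite.toFinset from by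
    ext x
    simp only [Finset.mem_filter, Finset.mem_univ, true_and, Set.Finite.mem_toFinset]]
  rfl

lemma eta_ext {X Y : Set G} (h1X : (1 : G) ∉ X) (h1Y : (1 : G) ∉ Y)
    (h : eta p e X = eta p e Y) : X = Y := by
  classical
  have hb : ∑ g : G,
      ((if g ∈ X then (1 : ℚ) else 0) - (if g ∈ Y then (1 : ℚ) else 0)) • chi p e g = 0 := by
    simp_rw [sub_smul]
    rw [Finset.sum_sub_distrib, eta_ind, eta_ind, h, sub_self]
  have hc := coeff_const p e _ hb
  ext g
  have hgb := hc g 1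
  rw [if_neg h1X, if_neg h1Y, sub_self] at hgb
  constructor
  · intro hg
    by_contra hY'
    rw [if_pos hg, if_neg hY'] at hgb
    norm_num at hgb
  · intro hg
    by_contra hX'
    rw [if_neg hX', if_pos hg] at hgb
    norm_num at hgb

noncomputable local instance basicFintype (A : SRing G) :
    Fintype {X : Set G // X ∈ A.basic} := (A.basic.toFinite).fintype

/-- The subgroup of `Aut(G)` corresponding to the Galois group of `L/E`. -/
def Kp : Subgroup (MulAut G) :=
  Subgroup.map (Phi p e) (EF p e A).fixingSubgroup

lemma claimA {σ : CyclotomicField p ℚ ≃ₐ[ℚ] CyclotomicField p ℚ}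
    (hσ : σ ∈ (EF p e A).fixingSubgroup) {X : Set G} (hX : X ∈ A.basic) :
    (fun g => Phi p e σ g) '' X = X := by
  have hfix : σ (eta p e X) = eta p e X := by
    rw [IntermediateField.mem_fixingSubgroup_iff] at hσ
    exact hσ _ ((mem_EF p e A).2 (eta_mem_MM p e A hX))
  have heq : eta p e ((fun g => Phi p e σ g) '' X) = eta p e X := by
    rw [← sigma_eta, hfix]
  by_cases hX1 : X = {1}
  · subst hX1
    rw [Set.image_singleton, map_one]
  · have h1X : (1 : G) ∉ X := not_one_mem A hX hX1
    refine eta_ext p e ?_ h1X heq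
    rintro ⟨x, hx, hx1⟩
    have hx' : x = 1 := (Phi p e σ).injective (by rw [map_one]; exact hx1)
    exact h1X (hx' ▸ hx)

lemma sum_partition (f : G → CyclotomicField p ℚ) :
    ∑ g : G, f g
      = ∑ i : {X : Set G // X ∈ A.basic}, ∑ x ∈ (i : Set G).toFinite.toFinset, f x := by
  classical
  have huniv : (Finset.univ : Finset G)
      = (Finset.univ : Finset {X : Set G // X ∈ A.basic}).biUnion
          (fun i => (i : Set G).toFinite.toFinset) := by
    ext g
    constructor
    · intro _
      refine Finset.mem_biUnion.2 ⟨⟨blk A g, blk_mem A g⟩, Finset.mem_univ _, ?_⟩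
      rw [Set.Finite.mem_toFinset]
      exact mem_blk A g
    · intro _
      exact Finset.mem_univ g
  have hdisj : (↑(Finset.univ : Finset {X : Set G // X ∈ A.basic}) :
      Set {X : Set G // X ∈ A.basic}).PairwiseDisjoint
        (fun i : {X : Set G // X ∈ A.basic} => (i : Set G).toFinite.toFinset) := by
    intro i _ j _ hij
    refine Finset.disjoint_left.2 fun x hxi hxj => hij ?_
    rw [Set.Finite.mem_toFinset] at hxi hxj
    exact Subtype.ext (basic_unique A i.2 j.2 hxi hxj)
  rw [show ∑ g : G, f g = ∑ g ∈ (Finset.univ : Finset G), f g from rfl, huniv,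
    Finset.sum_biUnion hdisj]

open scoped Classical in
lemma blocks {O : Set G} (hO : eta p e O ∈ MM p e A) {g h : G}
    (hgh : blk A g = blk A h) : g ∈ O ↔ h ∈ O := by
  rw [MM, Set.image_eq_range, Submodule.mem_span_range_iff_exists_fun] at hO
  obtain ⟨c, hc⟩ := hO
  set a : G → ℚ := fun x => c ⟨blk A x, blk_mem A x⟩ with ha
  have key : ∑ x : G, (a x - (if x ∈ O then (1 : ℚ) else 0)) • chi p e x = 0 := by
    have h1 : ∑ x : G, a x • chi p e x = eta p e O := by
      rw [sum_partition p A (fun x => a x • chi p e x), ← hc]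
      refine Finset.sum_congr rfl fun i _ => ?_
      erw [show eta p e (i : Set G) = ∑ x ∈ (i : Set G).toFinite.toFinset, chi p e x from rfl,
        Finset.smul_sum]
      refine Finset.sum_congr rfl fun x hx => ?_
      rw [Set.Finite.mem_toFinset] at hx
      exact congrArg (fun j => c j • chi p e x) (Subtype.ext (blk_eq A i.2 hx))
    simp_rw [sub_smul]
    rw [Finset.sum_sub_distrib, h1, eta_ind, sub_self]
  have hcst := coeff_const p e _ key g h
  have haeq : a g = a h := congrArg c (Subtype.ext hgh)
  rw [haeq] at hcst
  have : (if g ∈ O then (1 : ℚ) else 0) = (if h ∈ O then (1 : ℚ) else 0) := by linarith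
  by_cases hg : g ∈ O <;> by_cases hh : h ∈ O <;>
    simp only [hg, hh, if_true, if_false] at this ⊢ <;> norm_num at this

lemma orbit_eq_blk (g : G) :
    (fun φ : MulAut G => φ g) '' ((Kp p e A : Subgroup (MulAut G)) : Set (MulAut G))
      = blk A g := by
  set O : Set G := (fun φ : MulAut G => φ g) '' ((Kp p e A : Subgroup (MulAut G)) : Set (MulAut G))
    with hOdef
  have hsub : O ⊆ blk A g := by
    rintro _ ⟨φ, hφ, rfl⟩
    obtain ⟨σ, hσ, rfl⟩ := hφ
    have := claimA p e A hσ (blk_mem A g)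
    rw [← this]
    exact ⟨g, mem_blk A g, rfl⟩
  have hgO : g ∈ O := ⟨1, (Kp p e A).one_mem, rfl⟩
  have hinv : ∀ σ ∈ (EF p e A).fixingSubgroup, (fun x => Phi p e σ x) '' O = O := by
    intro σ hσ
    ext y
    constructor
    · rintro ⟨_, ⟨φ, hφ, rfl⟩, rfl⟩
      exact ⟨Phi p e σ * φ, (Kp p e A).mul_mem ⟨σ, hσ, rfl⟩ hφ, rfl⟩
    · rintro ⟨φ, hφ, rfl⟩
      refine ⟨((Phi p e σ)⁻¹ * φ) g, ⟨(Phi p e σ)⁻¹ * φ,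
        (Kp p e A).mul_mem ((Kp p e A).inv_mem ⟨σ, hσ, rfl⟩) hφ, rfl⟩, ?_⟩
      show (Phi p e σ) (((Phi p e σ)⁻¹ * φ) g) = φ g
      show (Phi p e σ) ((Phi p e σ)⁻¹ (φ g)) = φ g
      rw [MulAut.inv_def]
      exact (Phi p e σ).apply_symm_apply _
  have hO_mem : eta p e O ∈ MM p e A := by
    refine fix_mem p e A fun σ hσ => ?_
    rw [sigma_eta, hinv σ hσ]
  have hsup : blk A g ⊆ O := by
    intro h hh
    have hbe : blk A g = blk A h := (blk_eq A (blk_mem A g) hh).symm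
    exact (blocks p e A hO_mem hbe).1 hgO
  exact Set.Subset.antisymm hsub hsup

theorem main {H : Type*} [Group H] [Finite H] (hp : (Nat.card H).Prime) (A : SRing H) :
    A.IsCyclotomic := by
  classical
  haveI := Fintype.ofFinite H
  haveI hpF : Fact (Nat.card H).Prime := ⟨hp⟩
  have hc : IsCyclic H := isCyclic_of_prime_card (p := Nat.card H) rfl
  let pn : ℕ+ := ⟨Nat.card H, hp.pos⟩
  haveI : Fact ((pn : ℕ)).Prime := ⟨hp⟩
  let e : H ≃* Multiplicative (ZMod ((pn : ℕ))) := (zmodCyclicMulEquiv hc).symm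
  refine ⟨Kp pn e A, ?_⟩
  ext X
  constructor
  · intro hX
    obtain ⟨x, hx⟩ := A.nonempty X hX
    exact ⟨x, (orbit_eq_blk pn e A x).trans (blk_eq A hX hx)⟩
  · rintro ⟨g, rfl⟩
    show (fun φ : MulAut H => φ g) '' ((Kp pn e A : Subgroup (MulAut H)) : Set (MulAut H))
      ∈ A.basic
    rw [orbit_eq_blk pn e A g]
    exact blk_mem A g

end SRingPart

end S10

/-- Every S-ring over a group of prime order is cyclotomic. -/
theorem stmt10 (G : Type*) [Group G] [Finite G] (hp : (Nat.card G).Prime)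
    (A : SRing G) :
    A.IsCyclotomic :=
  S10.main hp A

end Paper
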